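/- For any k ≥ 2 and any even function u : ℝ → ℝ non-increasing on [0,∞) with u ∈ L²(ℝ), one has ∫_{|x|>1/2} u(x)^{2k} dx ≤ ‖u‖_{L²(ℝ)}^{2k} / (k−1). -/

import Mathlib

open MeasureTheory

theorem stmt_6 (u : ℝ → ℝ) (heven : ∀ x, u (-x) = u x)
    (hmono : AntitoneOn u (Set.Ici 0))
    (hint : Integrable (fun x => u x ^ 2))
    (k : ℕ) (hk : 2 ≤ k) :
    (∫ x in {x : ℝ | |x| > 1/2}, u x ^ (2 * k)) ≤ (∫ y, u y ^ 2) ^ k / (k - 1 : ℝ) := by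
  set I : ℝ := ∫ y, u y ^ 2 with hI
  have hk2 : (2:ℝ) ≤ (k:ℝ) := by exact_mod_cast hk
  have hk1 : (1:ℝ) < (k:ℝ) := by linarith
  have hka : -(k:ℝ) < -1 := by linarith
  have hI0 : 0 ≤ I := integral_nonneg fun x => sq_nonneg _
  -- u is nonnegative
  have hu0 : ∀ x, 0 ≤ u x := by
    have h0 : ∀ x, 0 ≤ x → 0 ≤ u x := by
      by_contra h
      push_neg at h
      obtain ⟨x₀, hx₀, hux₀⟩ := h
      have hsub : Set.Ici x₀ ⊆ {y | u x₀ ^ 2 ≤ u y ^ 2} := by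
        intro y hy
        have : u y ≤ u x₀ := hmono hx₀ (hx₀.trans hy) hy
        have : u y < 0 := lt_of_le_of_lt this hux₀
        simp only [Set.mem_setOf_eq]
        nlinarith
      have hfin := hint.measure_ge_lt_top (ε := u x₀ ^ 2) (by nlinarith)
      have : (volume (Set.Ici x₀)) ≤ volume {y | u x₀ ^ 2 ≤ u y ^ 2} :=
        measure_mono hsub
      rw [Real.volume_Ici] at this
      exact absurd (lt_of_le_of_lt this hfin) (by simp)
    intro x
    rcases le_or_gt 0 x with hx | hx
    · exact h0 x hx
    · rw [← heven x]; exact h0 (-x) (by linarith)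
  have huabs : ∀ x, u |x| = u x := by
    intro x
    rcases abs_choice x with h | h
    · rw [h]
    · rw [h, heven]
  -- key pointwise bound
  have hkey : ∀ x : ℝ, 0 < x → u x ^ 2 * (2 * x) ≤ I := by
    intro x hx
    have e1 : u x ^ 2 * (2 * x) = ∫ _ in Set.Icc (-x) x, u x ^ 2 := by
      rw [setIntegral_const, measureReal_def, Real.volume_Icc, smul_eq_mul,
        ENNReal.toReal_ofReal (by linarith)]
      ring
    rw [e1]
    have step1 : (∫ _ in Set.Icc (-x) x, u x ^ 2) ≤ ∫ y in Set.Icc (-x) x, u y ^ 2 := by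
      apply setIntegral_mono_on (integrableOn_const (by simp [Real.volume_Icc]))
        hint.integrableOn measurableSet_Icc
      intro y hy
      have hyabs : |y| ≤ x := abs_le.2 ⟨hy.1, hy.2⟩
      have : u x ≤ u |y| := hmono (abs_nonneg y) (by positivity : (0:ℝ) ≤ x) hyabs
      rw [huabs] at this
      exact pow_le_pow_left₀ (hu0 x) this 2
    have step2 : (∫ y in Set.Icc (-x) x, u y ^ 2) ≤ I :=
      setIntegral_le_integral hint (ae_of_all _ fun y => sq_nonneg _)
    linarith
  -- the dominating bound on Ioi (1/2)
  have hbound : ∀ x ∈ Set.Ioi (1/2 : ℝ), u x ^ (2 * k) ≤ I ^ k / (2 * x) ^ k := by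
    intro x hx
    have hx0 : (0:ℝ) < x := lt_trans (by norm_num) hx
    have h2x : (0:ℝ) < 2 * x := by linarith
    have h1 : u x ^ 2 ≤ I / (2 * x) := by
      rw [le_div_iff₀ h2x]; exact hkey x hx0
    calc u x ^ (2 * k) = (u x ^ 2) ^ k := by rw [← pow_mul]
      _ ≤ (I / (2 * x)) ^ k := pow_le_pow_left₀ (sq_nonneg _) h1 k
      _ = I ^ k / (2 * x) ^ k := div_pow _ _ _
  -- the dominating function agrees with a rpow on Ioi (1/2)
  have heq : Set.EqOn (fun x : ℝ => I ^ k / 2 ^ k * x ^ (-(k:ℝ)))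
      (fun x : ℝ => I ^ k / (2 * x) ^ k) (Set.Ioi (1/2 : ℝ)) := by
    intro x hx
    have hx0 : (0:ℝ) < x := lt_trans (by norm_num) hx
    simp only
    rw [Real.rpow_neg hx0.le, Real.rpow_natCast, mul_pow]
    field_simp
  have hg_int : IntegrableOn (fun x : ℝ => I ^ k / (2 * x) ^ k) (Set.Ioi (1/2 : ℝ)) := by
    have := ((integrableOn_Ioi_rpow_of_lt hka (show (0:ℝ) < 1/2 by norm_num)).const_mul
      (I ^ k / 2 ^ k))
    exact IntegrableOn.congr_fun this heq measurableSet_Ioi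
  -- measurability of u ^ (2k)
  have hfm : AEStronglyMeasurable (fun x => u x ^ (2 * k)) volume := by
    have h1 : AEStronglyMeasurable (fun x => (u x ^ 2) ^ k) volume :=
      (hint.aestronglyMeasurable.aemeasurable.pow_const k).aestronglyMeasurable
    simpa [pow_mul] using h1
  have hf_int : IntegrableOn (fun x => u x ^ (2 * k)) (Set.Ioi (1/2 : ℝ)) := by
    apply hg_int.mono' hfm.restrict
    rw [ae_restrict_iff' measurableSet_Ioi]
    filter_upwards with x hx
    rw [Real.norm_eq_abs, abs_of_nonneg ((even_two_mul k).pow_nonneg _)]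
    exact hbound x hx
  -- reduce the integral over {|x| > 1/2} to twice the integral over Ioi (1/2)
  have hSmeas : MeasurableSet {x : ℝ | |x| > 1/2} :=
    (isOpen_lt continuous_const continuous_abs).measurableSet
  have hsplit : (∫ x in {x : ℝ | |x| > 1/2}, u x ^ (2 * k))
      = 2 * ∫ x in Set.Ioi (1/2 : ℝ), u x ^ (2 * k) := by
    rw [← integral_indicator hSmeas]
    have hpt : ∀ x : ℝ, ({x : ℝ | |x| > 1/2}).indicator (fun x => u x ^ (2 * k)) x
        = (Set.Ioi (1/2 : ℝ)).indicator (fun x => u x ^ (2 * k)) |x| := by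
      intro x
      by_cases h : (1/2 : ℝ) < |x|
      · rw [Set.indicator_of_mem (by exact h), Set.indicator_of_mem (by exact h), huabs]
      · rw [Set.indicator_of_notMem (by exact h), Set.indicator_of_notMem (by exact h)]
    calc (∫ x, ({x : ℝ | |x| > 1/2}).indicator (fun x => u x ^ (2 * k)) x)
        = ∫ x, (Set.Ioi (1/2 : ℝ)).indicator (fun x => u x ^ (2 * k)) |x| := by
          exact congrArg _ (funext hpt)
      _ = 2 * ∫ x in Set.Ioi (0:ℝ), (Set.Ioi (1/2 : ℝ)).indicator (fun x => u x ^ (2 * k)) x :=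
          integral_comp_abs
      _ = 2 * ∫ x in Set.Ioi (0:ℝ) ∩ Set.Ioi (1/2 : ℝ), u x ^ (2 * k) := by
          rw [setIntegral_indicator measurableSet_Ioi]
      _ = 2 * ∫ x in Set.Ioi (1/2 : ℝ), u x ^ (2 * k) := by
          rw [Set.Ioi_inter_Ioi, max_eq_right (by norm_num : (0:ℝ) ≤ 1/2)]
  -- compute the integral of the dominating function
  have hgval : (∫ x in Set.Ioi (1/2 : ℝ), I ^ k / (2 * x) ^ k)
      = I ^ k / (2 * ((k:ℝ) - 1)) := by
    rw [← setIntegral_congr_fun measurableSet_Ioi heq, integral_const_mul,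
      integral_Ioi_rpow_of_lt hka (by norm_num : (0:ℝ) < 1/2)]
    have h2 : ((1:ℝ)/2) ^ (-(k:ℝ) + 1) = (2:ℝ) ^ k / 2 := by
      rw [show (-(k:ℝ) + 1) = -((k:ℝ) - 1) by ring, Real.rpow_neg (by norm_num), one_div,
        Real.inv_rpow (by norm_num), inv_inv, Real.rpow_sub (by norm_num), Real.rpow_one,
        Real.rpow_natCast]
    rw [h2, show (-(k:ℝ) + 1) = -((k:ℝ) - 1) by ring, neg_div_neg_eq]
    have h2k : (2:ℝ) ^ k ≠ 0 := by positivity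
    have hkm : (k:ℝ) - 1 ≠ 0 := by linarith
    field_simp
  -- put everything together
  rw [hsplit]
  have hmain : (∫ x in Set.Ioi (1/2 : ℝ), u x ^ (2 * k))
      ≤ ∫ x in Set.Ioi (1/2 : ℝ), I ^ k / (2 * x) ^ k :=
    setIntegral_mono_on hf_int hg_int measurableSet_Ioi hbound
  rw [hgval] at hmain
  have : 2 * (∫ x in Set.Ioi (1/2 : ℝ), u x ^ (2 * k)) ≤ 2 * (I ^ k / (2 * ((k:ℝ) - 1))) := by
    linarith
  calc 2 * (∫ x in Set.Ioi (1/2 : ℝ), u x ^ (2 * k)) ≤ 2 * (I ^ k / (2 * ((k:ℝ) - 1))) := this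
    _ = I ^ k / ((k:ℝ) - 1) := by
        have hkm : (k:ℝ) - 1 ≠ 0 := by linarith
        field_simp
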